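/- Let K be a valued field that is not algebraically closed. Let f(x) = x^n + a_{n-1}x^{n-1} + ... + a_0 ∈ K[x] have no zero in K, let G(X,Y) = X^n + a_{n-1}X^{n-1}Y + ... + a_0 Y^n be its homogenization, and set F(X,Y) = G(X, XY - 1). Then F has no zero in K^2, and the set {v(F(a,b)) : a,b ∈ K} ⊆ Γ ∪ {∞} has no maximal element. -/

import Mathlib

/-- Let `(K, v)` be a nontrivially valued field with value group `Γ` (so `v` is onto
`Γ ∪ {∞}`) which is not algebraically closed, witnessed by the monic polynomial
`f(x) = xⁿ + a_{n-1}x^{n-1} + ⋯ + a₀` without zeros in `K`.  With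
`G(X,Y) = Xⁿ + a_{n-1}X^{n-1}Y + ⋯ + a₀Yⁿ` the homogenization of `f` and
`F(X,Y) = G(X, XY - 1)`, the polynomial `F` has no zero in `K²` and the value set
`{v (F a b) : a b ∈ K}` has no maximal element. -/
theorem ershov_original_definition_fails {K Γ : Type*} [Field K]
    [AddCommGroup Γ] [LinearOrder Γ] [IsOrderedAddMonoid Γ] [Nontrivial Γ]
    (v : AddValuation K (WithTop Γ))
    (hsurj : ∀ γ : Γ, ∃ x : K, v x = (γ : WithTop Γ))
    (n : ℕ) (hn : 0 < n) (a : Fin n → K)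
    (hroot : ∀ x : K, x ^ n + ∑ i : Fin n, a i * x ^ (i : ℕ) ≠ 0) :
    (∀ c d : K,
      c ^ n + ∑ i : Fin n, a i * c ^ (i : ℕ) * (c * d - 1) ^ (n - (i : ℕ)) ≠ 0) ∧
    (∀ c d : K, ∃ c' d' : K,
      v (c ^ n + ∑ i : Fin n, a i * c ^ (i : ℕ) * (c * d - 1) ^ (n - (i : ℕ))) <
      v (c' ^ n + ∑ i : Fin n, a i * c' ^ (i : ℕ) * (c' * d' - 1) ^ (n - (i : ℕ)))) := by
  have hF : ∀ c d : K,
      c ^ n + ∑ i : Fin n, a i * c ^ (i : ℕ) * (c * d - 1) ^ (n - (i : ℕ)) ≠ 0 := by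
    intro c d h
    by_cases hb0 : (c * d - 1 : K) = 0
    · have hsum : ∀ i : Fin n, a i * c ^ (i : ℕ) * (c * d - 1) ^ (n - (i : ℕ)) = 0 := by
        intro i
        rw [hb0, zero_pow (by omega : n - (i : ℕ) ≠ 0), mul_zero]
      rw [Finset.sum_congr rfl (fun i _ => hsum i), Finset.sum_const_zero, add_zero] at h
      have hc : c = 0 := pow_eq_zero_iff hn.ne' |>.mp h
      rw [hc, zero_mul, zero_sub] at hb0
      exact one_ne_zero (neg_eq_zero.mp hb0)
    · apply hroot (c * (c * d - 1)⁻¹)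
      have key : (c * (c * d - 1)⁻¹) ^ n + ∑ i : Fin n, a i * (c * (c * d - 1)⁻¹) ^ (i : ℕ) =
          ((c * d - 1) ^ n)⁻¹ * (c ^ n + ∑ i : Fin n, a i * c ^ (i : ℕ) * (c * d - 1) ^ (n - (i : ℕ))) := by
        rw [mul_add, Finset.mul_sum]
        congr 1
        · field_simp
          rw [div_pow, div_mul_cancel₀ _ (pow_ne_zero _ hb0)]
        · refine Finset.sum_congr rfl fun i _ => ?_
          have hin : (i : ℕ) ≤ n := i.2.le
          have : (c * d - 1) ^ n = (c * d - 1) ^ (n - (i : ℕ)) * (c * d - 1) ^ (i : ℕ) := by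
            rw [← pow_add, Nat.sub_add_cancel hin]
          rw [this, mul_pow, inv_pow]
          field_simp
      rw [key, h, mul_zero]
  refine ⟨hF, fun c d => ?_⟩
  set u := c ^ n + ∑ i : Fin n, a i * c ^ (i : ℕ) * (c * d - 1) ^ (n - (i : ℕ)) with hu
  have hu0 : u ≠ 0 := hF c d
  have hvu : v u ≠ ⊤ := (AddValuation.ne_top_iff v).mpr hu0
  obtain ⟨γ₀, hγ₀⟩ : ∃ γ₀ : Γ, v u = (γ₀ : WithTop Γ) := by
    obtain ⟨g, hg⟩ := WithTop.ne_top_iff_exists.mp hvu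
    exact ⟨g, hg.symm⟩
  obtain ⟨δ, hδ⟩ : ∃ δ : Γ, 0 < δ := by
    obtain ⟨δ, hδ⟩ := exists_ne (0 : Γ)
    rcases lt_or_gt_of_ne hδ with h | h
    · exact ⟨-δ, by simpa using h⟩
    · exact ⟨δ, h⟩
  set γ : Γ := max γ₀ 0 + δ with hγ
  have hγpos : 0 < γ := lt_add_of_le_of_pos (le_max_right _ _) hδ
  have hlt : γ₀ < n • γ := by
    calc γ₀ ≤ max γ₀ 0 := le_max_left _ _
    _ < γ := by simpa [hγ] using hδ
    _ = 1 • γ := (one_smul ℕ γ).symm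
    _ ≤ n • γ := nsmul_le_nsmul_left hγpos.le hn
  obtain ⟨c', hc'⟩ := hsurj γ
  have hc'0 : c' ≠ 0 := by
    intro h
    rw [h, AddValuation.map_zero] at hc'
    exact (WithTop.coe_ne_top (a := γ)) hc'.symm
  refine ⟨c', c'⁻¹, ?_⟩
  have hone : c' * c'⁻¹ - 1 = 0 := by
    rw [mul_inv_cancel₀ hc'0, sub_self]
  have hval : c' ^ n + ∑ i : Fin n, a i * c' ^ (i : ℕ) * (c' * c'⁻¹ - 1) ^ (n - (i : ℕ))
      = c' ^ n := by
    rw [hone]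
    have : ∀ i : Fin n, a i * c' ^ (i : ℕ) * (0:K) ^ (n - (i : ℕ)) = 0 := fun i => by
      rw [zero_pow (by omega : n - (i : ℕ) ≠ 0), mul_zero]
    rw [Finset.sum_congr rfl (fun i _ => this i), Finset.sum_const_zero, add_zero]
  rw [hval, hγ₀, AddValuation.map_pow, hc']
  have : (n • (γ : WithTop Γ)) = ((n • γ : Γ) : WithTop Γ) := by
    simp
  rw [this]
  exact_mod_cast hlt
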